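/- Second-kind error of the mixed code: let X, Y be finite sets, d ∈ ℕ, and ρ : X × Y → S(ℂ^d) a map into density matrices. Let (P_i)_{i∈[M]} be probability distributions on X, (Q_j)_{j∈[N]} probability distributions on Y, and (D_{ij})_{i∈[M],j∈[N]} positive semidefinite matrices with Σ_{i∈[M],j∈[N]} D_{ij} ≤ 𝟙 (in the Loewner order). Let ε ∈ (0,1). Let A, A' ⊆ [M] and B, B' ⊆ [N] be nonempty subsets satisfying |A ∩ A'|·|B ∩ B'| ≤ ε·|A|·|B|, and suppose for all i ∈ [M], j ∈ [N]: Σ_{x,y} P_i(x)Q_j(y) tr(D_{ij} ρ(x,y)) ≥ 1 − ε. Define P'(x) := (1/|A|) Σ_{i∈A} P_i(x), Q'(y) := (1/|B|) Σ_{j∈B} Q_j(y), and I' := Σ_{r∈A'} Σ_{s∈B'} D_{rs}. Then Σ_{x,y} P'(x)Q'(y) tr(I' ρ(x,y)) ≤ 4ε. -/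

import Mathlib

open Matrix BigOperators
open scoped ComplexOrder

/-- A density matrix: positive semidefinite with trace one. -/
def IsDensityMatrix {d : ℕ} (ρ : Matrix (Fin d) (Fin d) ℂ) : Prop :=
  ρ.PosSemidef ∧ ρ.trace = 1

/-- A probability distribution on a finite set. -/
def IsProbDist {α : Type} [Fintype α] (P : α → ℝ) : Prop :=
  (∀ a, 0 ≤ P a) ∧ ∑ a, P a = 1

lemma aux_trace_nonneg {d : ℕ} {A : Matrix (Fin d) (Fin d) ℂ} (hA : A.PosSemidef) :
    0 ≤ A.trace.re := by
  have h : ∀ i, 0 ≤ (A i i).re := by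
    intro i
    have := hA.re_dotProduct_nonneg (Pi.single i 1)
    simpa [dotProduct, mulVec, Pi.single_apply, Finset.sum_ite_eq'] using this
  rw [Matrix.trace, Complex.re_sum]
  exact Finset.sum_nonneg fun i _ => h i

open scoped MatrixOrder in
lemma aux_trace_mul_nonneg {d : ℕ} {A B : Matrix (Fin d) (Fin d) ℂ}
    (hA : A.PosSemidef) (hB : B.PosSemidef) : 0 ≤ ((A * B).trace).re := by
  have h1 : A * B = CFC.sqrt A * (CFC.sqrt A * B) := by
    rw [← mul_assoc, CFC.sqrt_mul_sqrt_self A hA.nonneg]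
  have h2 : (CFC.sqrt A * (CFC.sqrt A * B)).trace = (CFC.sqrt A * B * CFC.sqrt A).trace := by
    rw [trace_mul_comm, mul_assoc]
  have h3 : (CFC.sqrt A * B * CFC.sqrt A).PosSemidef := by
    have hS : (CFC.sqrt A)ᴴ = CFC.sqrt A := (CFC.sqrt_nonneg A).posSemidef.isHermitian
    have := hB.mul_mul_conjTranspose_same (CFC.sqrt A)
    rwa [hS] at this
  rw [h1, h2]
  exact aux_trace_nonneg h3

lemma aux_sum_posSemidef {d : ℕ} {ι : Type*} (s : Finset ι) (f : ι → Matrix (Fin d) (Fin d) ℂ)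
    (hf : ∀ i ∈ s, (f i).PosSemidef) : (∑ i ∈ s, f i).PosSemidef :=
  Finset.sum_induction f _ (fun _ _ ha hb => ha.add hb) Matrix.PosSemidef.zero hf

lemma aux_sum_swap4 {X Y I J : Type} [Fintype X] [Fintype Y] (A : Finset I) (B : Finset J)
    (F : I → J → X → Y → ℝ) :
    ∑ x, ∑ y, ∑ i ∈ A, ∑ j ∈ B, F i j x y = ∑ i ∈ A, ∑ j ∈ B, ∑ x, ∑ y, F i j x y := by
  calc ∑ x, ∑ y, ∑ i ∈ A, ∑ j ∈ B, F i j x y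
      = ∑ x, ∑ i ∈ A, ∑ y, ∑ j ∈ B, F i j x y :=
        Finset.sum_congr rfl fun x _ => Finset.sum_comm
    _ = ∑ i ∈ A, ∑ x, ∑ y, ∑ j ∈ B, F i j x y := Finset.sum_comm
    _ = ∑ i ∈ A, ∑ x, ∑ j ∈ B, ∑ y, F i j x y :=
        Finset.sum_congr rfl fun i _ => Finset.sum_congr rfl fun x _ => Finset.sum_comm
    _ = ∑ i ∈ A, ∑ j ∈ B, ∑ x, ∑ y, F i j x y :=
        Finset.sum_congr rfl fun i _ => Finset.sum_comm

/-- **Second-kind error of the mixed code.**  Suppose the sub-POVM `(D_{ij})` decodes every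
pair `(i,j)` with probability at least `1 − ε`, and `A, A' ⊆ [M]`, `B, B' ⊆ [N]` are nonempty
subsets with `|A ∩ A'|·|B ∩ B'| ≤ ε·|A|·|B|`.  Then the mixed encoders for `(A,B)` trigger
the identification operator `I' = ∑_{r∈A'} ∑_{s∈B'} D_{rs}` with probability at most `4ε`. -/
theorem second_kind_error_mixed_code {X Y : Type} [Fintype X] [Fintype Y] {d : ℕ}
    (ρ : X → Y → Matrix (Fin d) (Fin d) ℂ)
    (hρ : ∀ x y, IsDensityMatrix (ρ x y))
    {M N : ℕ} (P : Fin M → X → ℝ) (Q : Fin N → Y → ℝ)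
    (hP : ∀ i, IsProbDist (P i)) (hQ : ∀ j, IsProbDist (Q j))
    (D : Fin M → Fin N → Matrix (Fin d) (Fin d) ℂ)
    (hD : ∀ i j, (D i j).PosSemidef)
    (hDsum : ((1 : Matrix (Fin d) (Fin d) ℂ) - ∑ i, ∑ j, D i j).PosSemidef)
    (ε : ℝ) (hε : ε ∈ Set.Ioo (0:ℝ) 1)
    (A A' : Finset (Fin M)) (B B' : Finset (Fin N))
    (hA : A.Nonempty) (hB : B.Nonempty)
    (hoverlap : ((A ∩ A').card : ℝ) * ((B ∩ B').card : ℝ)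
      ≤ ε * (A.card : ℝ) * (B.card : ℝ))
    (hgood : ∀ i j, 1 - ε ≤ ∑ x, ∑ y, P i x * Q j y * ((D i j * ρ x y).trace).re) :
    ∑ x, ∑ y,
        (((1 : ℝ) / A.card) * ∑ i ∈ A, P i x) *
        (((1 : ℝ) / B.card) * ∑ j ∈ B, Q j y) *
        (((∑ r ∈ A', ∑ s ∈ B', D r s) * ρ x y).trace).re ≤ 4 * ε := by
  classical
  obtain ⟨hε0, hε1⟩ := hε
  set Dall : Matrix (Fin d) (Fin d) ℂ := ∑ i, ∑ j, D i j with hDall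
  set I' : Matrix (Fin d) (Fin d) ℂ := ∑ r ∈ A', ∑ s ∈ B', D r s with hI'
  set t : X → Y → ℝ := fun x y => ((I' * ρ x y).trace).re with ht
  have hsub : A' ×ˢ B' ⊆ (Finset.univ ×ˢ Finset.univ : Finset (Fin M × Fin N)) :=
    Finset.subset_univ _
  have e1 : I' = ∑ p ∈ A' ×ˢ B', D p.1 p.2 :=
    (Finset.sum_product _ _ (fun p => D p.1 p.2)).symm
  have e2 : Dall = ∑ p ∈ (Finset.univ ×ˢ Finset.univ : Finset (Fin M × Fin N)), D p.1 p.2 :=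
    (Finset.sum_product _ _ (fun p => D p.1 p.2)).symm
  have hsplit : ∑ p ∈ (Finset.univ ×ˢ Finset.univ) \ (A' ×ˢ B'), D p.1 p.2 + I' = Dall := by
    rw [e1, e2]
    exact Finset.sum_sdiff hsub
  have hdiffeq : Dall - I' = ∑ p ∈ (Finset.univ ×ˢ Finset.univ) \ (A' ×ˢ B'), D p.1 p.2 := by
    rw [← hsplit, add_sub_cancel_right]
  have hAI : (Dall - I').PosSemidef := by
    rw [hdiffeq]; exact aux_sum_posSemidef _ _ fun p _ => hD p.1 p.2
  have hI'le1 : ((1 : Matrix (Fin d) (Fin d) ℂ) - I').PosSemidef := by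
    have h := hDsum.add hAI
    rwa [sub_add_sub_cancel] at h
  -- pointwise bound t ≤ 1
  have htr1 : ∀ x y, t x y ≤ 1 := by
    intro x y
    have h := aux_trace_mul_nonneg hI'le1 (hρ x y).1
    rw [sub_mul, one_mul, trace_sub, Complex.sub_re, (hρ x y).2, Complex.one_re] at h
    simpa [ht] using by linarith
  -- pointwise bound for bad pairs
  have hbad : ∀ i j, ¬(i ∈ A' ∧ j ∈ B') → ∀ x y,
      t x y ≤ 1 - ((D i j * ρ x y).trace).re := by
    intro i j hij x y
    have hmem : (i, j) ∈ (Finset.univ ×ˢ Finset.univ) \ (A' ×ˢ B') := by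
      simp [Finset.mem_product]
      tauto
    have heq : Dall - I' - D i j
        = ∑ p ∈ ((Finset.univ ×ˢ Finset.univ) \ (A' ×ˢ B')).erase (i, j), D p.1 p.2 := by
      rw [hdiffeq, ← Finset.add_sum_erase _ _ hmem, add_sub_cancel_left]
    have hpsd : ((1 : Matrix (Fin d) (Fin d) ℂ) - I' - D i j).PosSemidef := by
      have h1 : (Dall - I' - D i j).PosSemidef := by
        rw [heq]; exact aux_sum_posSemidef _ _ fun p _ => hD p.1 p.2
      have h := hDsum.add h1
      have : (1 : Matrix (Fin d) (Fin d) ℂ) - Dall + (Dall - I' - D i j)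
          = 1 - I' - D i j := by abel
      rwa [this] at h
    have h := aux_trace_mul_nonneg hpsd (hρ x y).1
    rw [sub_mul, sub_mul, one_mul, trace_sub, trace_sub, Complex.sub_re, Complex.sub_re,
      (hρ x y).2, Complex.one_re] at h
    simp only [ht]
    linarith
  -- per-pair bound on the mixed sum
  have key : ∀ i ∈ A, ∀ j ∈ B,
      ∑ x, ∑ y, P i x * Q j y * t x y
        ≤ (if i ∈ A' ∧ j ∈ B' then (1:ℝ) else 0) + ε := by
    intro i _ j _
    have hPQ1 : ∑ x, ∑ y, P i x * Q j y = 1 := by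
      rw [← Finset.sum_mul_sum, (hP i).2, (hQ j).2, one_mul]
    by_cases hij : i ∈ A' ∧ j ∈ B'
    · rw [if_pos hij]
      have h1 : ∑ x, ∑ y, P i x * Q j y * t x y ≤ ∑ x, ∑ y, P i x * Q j y * 1 := by
        refine Finset.sum_le_sum fun x _ => Finset.sum_le_sum fun y _ => ?_
        exact mul_le_mul_of_nonneg_left (htr1 x y)
          (mul_nonneg ((hP i).1 x) ((hQ j).1 y))
      simp only [mul_one] at h1
      rw [hPQ1] at h1
      linarith
    · rw [if_neg hij, zero_add]
      have h1 : ∑ x, ∑ y, P i x * Q j y * t x y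
          ≤ ∑ x, ∑ y, P i x * Q j y * (1 - ((D i j * ρ x y).trace).re) := by
        refine Finset.sum_le_sum fun x _ => Finset.sum_le_sum fun y _ => ?_
        exact mul_le_mul_of_nonneg_left (hbad i j hij x y)
          (mul_nonneg ((hP i).1 x) ((hQ j).1 y))
      have h2 : ∑ x, ∑ y, P i x * Q j y * (1 - ((D i j * ρ x y).trace).re)
          = (∑ x, ∑ y, P i x * Q j y)
            - ∑ x, ∑ y, P i x * Q j y * ((D i j * ρ x y).trace).re := by
        simp only [mul_sub, mul_one, Finset.sum_sub_distrib]
      have h3 := hgood i j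
      rw [h2, hPQ1] at h1
      linarith
  -- rewrite LHS
  have hAc : (0:ℝ) < (A.card : ℝ) := by exact_mod_cast Finset.card_pos.mpr hA
  have hBc : (0:ℝ) < (B.card : ℝ) := by exact_mod_cast Finset.card_pos.mpr hB
  have hL : ∑ x, ∑ y,
        (((1 : ℝ) / A.card) * ∑ i ∈ A, P i x) *
        (((1 : ℝ) / B.card) * ∑ j ∈ B, Q j y) * t x y
      = ((1:ℝ) / A.card) * ((1:ℝ) / B.card) *
        ∑ i ∈ A, ∑ j ∈ B, ∑ x, ∑ y, P i x * Q j y * t x y := by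
    have hxy : ∀ x y,
        (((1 : ℝ) / A.card) * ∑ i ∈ A, P i x) *
        (((1 : ℝ) / B.card) * ∑ j ∈ B, Q j y) * t x y
        = ((1:ℝ) / A.card) * ((1:ℝ) / B.card) *
          ∑ i ∈ A, ∑ j ∈ B, P i x * Q j y * t x y := by
      intro x y
      have h : ∑ i ∈ A, ∑ j ∈ B, P i x * Q j y * t x y
          = (∑ i ∈ A, P i x) * (∑ j ∈ B, Q j y) * t x y := by
        rw [Finset.sum_mul_sum, Finset.sum_mul]
        exact Finset.sum_congr rfl fun i _ => by rw [Finset.sum_mul]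
      rw [h]; ring
    calc ∑ x, ∑ y,
        (((1 : ℝ) / A.card) * ∑ i ∈ A, P i x) *
        (((1 : ℝ) / B.card) * ∑ j ∈ B, Q j y) * t x y
        = ∑ x, ∑ y, ((1:ℝ) / A.card) * ((1:ℝ) / B.card) *
            ∑ i ∈ A, ∑ j ∈ B, P i x * Q j y * t x y :=
          Finset.sum_congr rfl fun x _ => Finset.sum_congr rfl fun y _ => hxy x y
      _ = ((1:ℝ) / A.card) * ((1:ℝ) / B.card) *
            ∑ x, ∑ y, ∑ i ∈ A, ∑ j ∈ B, P i x * Q j y * t x y := by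
          rw [Finset.mul_sum]
          exact Finset.sum_congr rfl fun x _ => (Finset.mul_sum _ _ _).symm
      _ = ((1:ℝ) / A.card) * ((1:ℝ) / B.card) *
            ∑ i ∈ A, ∑ j ∈ B, ∑ x, ∑ y, P i x * Q j y * t x y := by
          rw [aux_sum_swap4]
  rw [hL]
  -- bound the double sum
  have hsum : ∑ i ∈ A, ∑ j ∈ B, ∑ x, ∑ y, P i x * Q j y * t x y
      ≤ ((A ∩ A').card : ℝ) * ((B ∩ B').card : ℝ) + ε * ((A.card : ℝ) * (B.card : ℝ)) := by
    have h1 : ∑ i ∈ A, ∑ j ∈ B, ∑ x, ∑ y, P i x * Q j y * t x y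
        ≤ ∑ i ∈ A, ∑ j ∈ B, ((if i ∈ A' ∧ j ∈ B' then (1:ℝ) else 0) + ε) :=
      Finset.sum_le_sum fun i hi => Finset.sum_le_sum fun j hj => key i hi j hj
    have h2 : ∑ i ∈ A, ∑ j ∈ B, ((if i ∈ A' ∧ j ∈ B' then (1:ℝ) else 0) + ε)
        = ((A ∩ A').card : ℝ) * ((B ∩ B').card : ℝ)
          + ε * ((A.card : ℝ) * (B.card : ℝ)) := by
      have hind : ∀ i j, (if i ∈ A' ∧ j ∈ B' then (1:ℝ) else 0)
          = (if i ∈ A' then (1:ℝ) else 0) * (if j ∈ B' then (1:ℝ) else 0) := by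
        intro i j
        by_cases h1 : i ∈ A' <;> by_cases h2 : j ∈ B' <;> simp [h1, h2]
      simp only [hind, Finset.sum_add_distrib, Finset.sum_const, nsmul_eq_mul]
      rw [← Finset.sum_mul_sum]
      have hca : ∑ i ∈ A, (if i ∈ A' then (1:ℝ) else 0) = ((A ∩ A').card : ℝ) := by
        rw [Finset.sum_ite_mem]
        simp
      have hcb : ∑ j ∈ B, (if j ∈ B' then (1:ℝ) else 0) = ((B ∩ B').card : ℝ) := by
        rw [Finset.sum_ite_mem]
        simp
      rw [hca, hcb]
      ring
    linarith
  have hfinal : ((1:ℝ) / A.card) * ((1:ℝ) / B.card) *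
      (((A ∩ A').card : ℝ) * ((B ∩ B').card : ℝ) + ε * ((A.card : ℝ) * (B.card : ℝ)))
      ≤ 4 * ε := by
    have h1 : ((A ∩ A').card : ℝ) * ((B ∩ B').card : ℝ)
        ≤ ε * ((A.card : ℝ) * (B.card : ℝ)) := by
      have := hoverlap; nlinarith
    have h2 : ((1:ℝ) / A.card) * ((1:ℝ) / B.card) *
        (ε * ((A.card : ℝ) * (B.card : ℝ)) + ε * ((A.card : ℝ) * (B.card : ℝ)))
        = 2 * ε := by
      field_simp
      ring
    have hpos : (0:ℝ) < ((1:ℝ) / A.card) * ((1:ℝ) / B.card) := by positivity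
    nlinarith
  have hmono : ((1:ℝ) / A.card) * ((1:ℝ) / B.card) *
      (∑ i ∈ A, ∑ j ∈ B, ∑ x, ∑ y, P i x * Q j y * t x y)
      ≤ ((1:ℝ) / A.card) * ((1:ℝ) / B.card) *
      (((A ∩ A').card : ℝ) * ((B ∩ B').card : ℝ) + ε * ((A.card : ℝ) * (B.card : ℝ))) := by
    have hpos : (0:ℝ) ≤ ((1:ℝ) / A.card) * ((1:ℝ) / B.card) := by positivity
    exact mul_le_mul_of_nonneg_left hsum hpos
  linarith
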